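/- Fix class-c users indexed by a finite set K_c containing k, and other-class users indexed by sets K_{c̃}, c̃ ≠ c. Let U ∈ ℂ^{N×N} have orthonormal columns, partitioned into sub-matrices U_c of sizes N×N_c; for each user j of class c̃ let c_j = U_{c̃} w_j with ‖w_j‖ = 1, and set C_j = diag(c_j) ⊗ I_M. Suppose the covariance matrices have exact Kronecker structure: R_j = 1_{N×N} ⊗ Ř_j and Φ_k = 1_{N×N} ⊗ Φ̌_k with Ř_j, Φ̌_k ∈ ℂ^{M×M}. Let σ² and all powers P_{c̃} and gains g_j be positive reals. Then the matched-filter deterministic SINR γ̄_k^{MF} = P_c g_k ((1/(NM)) tr C_kΦ_kC_k^H)² / [ (σ²/(NM)²) tr C_kΦ_kC_k^H + (1/(NM)) Σ_{c̃=1}^C Σ_{j∈K_{c̃}} P_{c̃} g_j (1/(NM)) tr( C_j R_j C_j^H C_k Φ_k C_k^H ) ] equals P_c g_k ((1/M) tr Φ̌_k)² / [ (σ²/M²) tr Φ̌_k + (1/M) Σ_{j∈K_c} P_c g_j (1/M) |w_j^H w_k|² tr( Ř_j Φ̌_k ) ]; in particular all cross-class interference terms vanish exactly. -/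

import Mathlib

open Matrix Kronecker

private lemma kron_ct {n m : ℕ} (a : Fin n → ℂ) :
    ((Matrix.diagonal a) ⊗ₖ (1 : Matrix (Fin m) (Fin m) ℂ))ᴴ
      = (Matrix.diagonal (star a)) ⊗ₖ (1 : Matrix (Fin m) (Fin m) ℂ) := by
  ext ⟨i, j⟩ ⟨i', j'⟩
  by_cases h : i = i' <;> by_cases h2 : j = j' <;>
    simp [Matrix.conjTranspose_apply, Matrix.diagonal_apply, Matrix.one_apply, h, h2, Ne.symm,
      kroneckerMap_apply]

private lemma diag_J_diag {n : ℕ} (a : Fin n → ℂ) :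
    Matrix.diagonal a * (Matrix.of fun _ _ => (1 : ℂ) : Matrix (Fin n) (Fin n) ℂ)
        * Matrix.diagonal (star a) = vecMulVec a (star a) := by
  ext i j
  simp [Matrix.mul_diagonal, Matrix.diagonal_mul, Matrix.vecMulVec_apply]

private lemma kron_prod_structure {n m : ℕ} (a : Fin n → ℂ) (A : Matrix (Fin m) (Fin m) ℂ) :
    (Matrix.diagonal a ⊗ₖ (1 : Matrix (Fin m) (Fin m) ℂ))
        * ((Matrix.of fun _ _ => (1 : ℂ) : Matrix (Fin n) (Fin n) ℂ) ⊗ₖ A)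
        * (Matrix.diagonal a ⊗ₖ (1 : Matrix (Fin m) (Fin m) ℂ))ᴴ
      = vecMulVec a (star a) ⊗ₖ A := by
  rw [kron_ct, ← Matrix.mul_kronecker_mul, ← Matrix.mul_kronecker_mul, Matrix.one_mul,
    Matrix.mul_one, diag_J_diag]

private lemma vmv_mul {n : ℕ} (a b c d : Fin n → ℂ) :
    vecMulVec a b * vecMulVec c d = (b ⬝ᵥ c) • vecMulVec a d := by
  ext i j
  simp only [Matrix.mul_apply, Matrix.vecMulVec_apply, Matrix.smul_apply, dotProduct,
    smul_eq_mul, Finset.sum_mul]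
  apply Finset.sum_congr rfl
  intros; ring

private lemma trace_vmv {n : ℕ} (a b : Fin n → ℂ) :
    (vecMulVec a b).trace = a ⬝ᵥ b := by
  simp [Matrix.trace, Matrix.diag, Matrix.vecMulVec_apply, dotProduct]

private lemma myscal (a T S σ q : ℂ) (hq : q ≠ 0) :
    a * ((1 / q) * T) ^ 2 / (σ / q ^ 2 * T + (1 / q) * ((1 / q) * S))
      = a * T ^ 2 / (σ * T + S) := by
  have h1 : a * ((1 / q) * T) ^ 2 = (a * T ^ 2) / q ^ 2 := by
    field_simp
  have h2 : σ / q ^ 2 * T + (1 / q) * ((1 / q) * S) = (σ * T + S) / q ^ 2 := by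
    field_simp
  rw [h1, h2]
  rcases eq_or_ne (σ * T + S) 0 with h | h
  · simp [h]
  · field_simp

/-- **Corollary 1 of the paper: the matched-filter deterministic SINR under exact flat
(Kronecker) correlation.**
There are `C` service classes; class `c̃` has `K c̃` users with signatures
`w c̃ j ∈ ℂ^{Nc c̃}` of unit norm.  The spreading code of user `j` of class `c̃` is
`c_j = U_{c̃} w_j`, where `U` has orthonormal columns and `U_{c̃}` is the `N × (Nc c̃)`
sub-matrix of its columns selected by the injection `e c̃` (the ranges being pairwise
disjoint); its code matrix is `C_j = diag(c_j) ⊗ I_M`.  The covariance matrices have exact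
Kronecker structure `R_j = 1_{N×N} ⊗ Ř_j` and `Φ_k = 1_{N×N} ⊗ Φ̌_k`.  Then for a user `k`
of class `c`, the matched-filter deterministic SINR
`γ̄_k^MF = P_c g_k ((1/(NM)) tr C_kΦ_kC_kᴴ)² / [ (σ²/(NM)²) tr C_kΦ_kC_kᴴ +
(1/(NM)) ∑_{c̃} ∑_{j∈K_{c̃}} P_{c̃} g_j (1/(NM)) tr( C_j R_j C_jᴴ C_k Φ_k C_kᴴ ) ]`
equals
`P_c g_k ((1/M) tr Φ̌_k)² / [ (σ²/M²) tr Φ̌_k +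
(1/M) ∑_{j∈K_c} P_c g_j (1/M) |w_jᴴ w_k|² tr( Ř_j Φ̌_k ) ]`;
in particular all cross-class interference terms vanish exactly. -/
theorem moma_mf_sinr_flat_correlation {N M C : ℕ} (hN : 0 < N) (hM : 0 < M)
    (Nc : Fin C → ℕ) (K : Fin C → ℕ)
    (U : Matrix (Fin N) (Fin N) ℂ) (hU : Uᴴ * U = 1)
    (e : ∀ ct : Fin C, Fin (Nc ct) → Fin N)
    (hinj : ∀ ct, Function.Injective (e ct))
    (hdisj : ∀ ct ct', ct ≠ ct' → ∀ u v, e ct u ≠ e ct' v)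
    (w : ∀ ct : Fin C, Fin (K ct) → Fin (Nc ct) → ℂ)
    (hw : ∀ ct j, ∑ u, ‖w ct j u‖ ^ 2 = 1)
    (cvec : ∀ ct : Fin C, Fin (K ct) → Fin N → ℂ)
    (hcvec : ∀ ct j, cvec ct j = (U.submatrix id (e ct)).mulVec (w ct j))
    (Cm : ∀ ct : Fin C, Fin (K ct) → Matrix (Fin N × Fin M) (Fin N × Fin M) ℂ)
    (hCm : ∀ ct j, Cm ct j
        = Matrix.diagonal (cvec ct j) ⊗ₖ (1 : Matrix (Fin M) (Fin M) ℂ))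
    (Rcheck : ∀ ct : Fin C, Fin (K ct) → Matrix (Fin M) (Fin M) ℂ)
    (Rfull : ∀ ct : Fin C, Fin (K ct) → Matrix (Fin N × Fin M) (Fin N × Fin M) ℂ)
    (hRfull : ∀ ct j, Rfull ct j
        = (Matrix.of fun _ _ => (1 : ℂ) : Matrix (Fin N) (Fin N) ℂ) ⊗ₖ Rcheck ct j)
    (Phicheck : Matrix (Fin M) (Fin M) ℂ)
    (Phifull : Matrix (Fin N × Fin M) (Fin N × Fin M) ℂ)
    (hPhifull : Phifull
        = (Matrix.of fun _ _ => (1 : ℂ) : Matrix (Fin N) (Fin N) ℂ) ⊗ₖ Phicheck)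
    (σ2 : ℝ) (hσ2 : 0 < σ2)
    (P : Fin C → ℝ) (hP : ∀ ct, 0 < P ct)
    (g : ∀ ct : Fin C, Fin (K ct) → ℝ) (hg : ∀ ct j, 0 < g ct j)
    (c : Fin C) (k : Fin (K c)) :
    (((P c * g c k : ℝ) : ℂ) *
        ((1 / ((N : ℂ) * M)) * (Cm c k * Phifull * (Cm c k)ᴴ).trace) ^ 2 /
      (((σ2 : ℂ) / ((N : ℂ) * M) ^ 2) * (Cm c k * Phifull * (Cm c k)ᴴ).trace +
        (1 / ((N : ℂ) * M)) * ∑ ct : Fin C, ∑ j : Fin (K ct),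
          ((P ct * g ct j : ℝ) : ℂ) * ((1 / ((N : ℂ) * M)) *
            (Cm ct j * Rfull ct j * (Cm ct j)ᴴ *
              (Cm c k * Phifull * (Cm c k)ᴴ)).trace))
      = ((P c * g c k : ℝ) : ℂ) * ((1 / (M : ℂ)) * Phicheck.trace) ^ 2 /
        (((σ2 : ℂ) / (M : ℂ) ^ 2) * Phicheck.trace +
          (1 / (M : ℂ)) * ∑ j : Fin (K c),
            ((P c * g c j : ℝ) : ℂ) * ((1 / (M : ℂ)) *
              ((‖star (w c j) ⬝ᵥ w c k‖ ^ 2 : ℝ) : ℂ) *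
              (Rcheck c j * Phicheck).trace))) ∧
    (∀ ct : Fin C, ct ≠ c → ∀ j : Fin (K ct),
      (Cm ct j * Rfull ct j * (Cm ct j)ᴴ * (Cm c k * Phifull * (Cm c k)ᴴ)).trace = 0) := by
  classical
  have key : ∀ ct ct' (j : Fin (K ct)) (j' : Fin (K ct')),
      star (cvec ct j) ⬝ᵥ cvec ct' j'
        = (star (w ct j) ᵥ* ((Uᴴ * U).submatrix (e ct) (e ct'))) ⬝ᵥ w ct' j' := by
    intro ct ct' j j'
    rw [hcvec, hcvec, Matrix.star_mulVec, Matrix.dotProduct_mulVec, Matrix.vecMul_vecMul,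
      Matrix.conjTranspose_submatrix,
      ← Matrix.submatrix_mul Uᴴ U (e ct) id (e ct') Function.bijective_id]
  have hsub_same : (Uᴴ * U).submatrix (e c) (e c) = 1 := by
    rw [hU]; ext u v
    simp [Matrix.one_apply, Matrix.submatrix_apply, (hinj c).eq_iff]
  have hdot_same : ∀ j j' : Fin (K c),
      star (cvec c j) ⬝ᵥ cvec c j' = star (w c j) ⬝ᵥ w c j' := by
    intro j j'; rw [key, hsub_same, Matrix.vecMul_one]
  have hdot_zero : ∀ ct, ct ≠ c → ∀ j : Fin (K ct),
      star (cvec ct j) ⬝ᵥ cvec c k = 0 := by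
    intro ct hne j
    have h0 : (Uᴴ * U).submatrix (e ct) (e c) = 0 := by
      rw [hU]; ext u v
      simp [Matrix.one_apply, Matrix.submatrix_apply, hdisj ct c hne u v]
    rw [key, h0, Matrix.vecMul_zero, zero_dotProduct]
  have hz : ∀ z : ℂ, star z * z = ((‖z‖ ^ 2 : ℝ) : ℂ) := by
    intro z
    simp [Complex.star_def, mul_comm, Complex.mul_conj, Complex.normSq_eq_norm_sq]
  have hnormk : star (cvec c k) ⬝ᵥ cvec c k = 1 := by
    rw [hdot_same]
    have h1 : star (w c k) ⬝ᵥ w c k = ∑ u, ((‖w c k u‖ ^ 2 : ℝ) : ℂ) := by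
      simp only [dotProduct, Pi.star_apply, hz]
    rw [h1, ← Complex.ofReal_sum, hw c k, Complex.ofReal_one]
  have hS : Cm c k * Phifull * (Cm c k)ᴴ
      = vecMulVec (cvec c k) (star (cvec c k)) ⊗ₖ Phicheck := by
    rw [hCm, hPhifull, kron_prod_structure]
  have htrS : (Cm c k * Phifull * (Cm c k)ᴴ).trace = Phicheck.trace := by
    rw [hS, Matrix.trace_kronecker, trace_vmv, dotProduct_comm, hnormk, one_mul]
  have hT : ∀ ct (j : Fin (K ct)),
      (Cm ct j * Rfull ct j * (Cm ct j)ᴴ * (Cm c k * Phifull * (Cm c k)ᴴ)).trace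
        = (star (cvec ct j) ⬝ᵥ cvec c k) * (star (cvec c k) ⬝ᵥ cvec ct j)
            * (Rcheck ct j * Phicheck).trace := by
    intro ct j
    rw [hS, hCm, hRfull, kron_prod_structure, ← Matrix.mul_kronecker_mul, vmv_mul,
      Matrix.smul_kronecker, Matrix.trace_smul, Matrix.trace_kronecker, trace_vmv,
      smul_eq_mul, dotProduct_comm (cvec ct j) (star (cvec c k))]
    ring
  have hzero : ∀ ct, ct ≠ c → ∀ j : Fin (K ct),
      (Cm ct j * Rfull ct j * (Cm ct j)ᴴ * (Cm c k * Phifull * (Cm c k)ᴴ)).trace = 0 := by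
    intro ct hne j
    rw [hT, hdot_zero ct hne j, zero_mul, zero_mul]
  refine ⟨?_, hzero⟩
  have hTc : ∀ j : Fin (K c),
      (Cm c j * Rfull c j * (Cm c j)ᴴ * (Cm c k * Phifull * (Cm c k)ᴴ)).trace
        = ((‖star (w c j) ⬝ᵥ w c k‖ ^ 2 : ℝ) : ℂ) * (Rcheck c j * Phicheck).trace := by
    intro j
    have h2 : star (cvec c k) ⬝ᵥ cvec c j = star (star (w c j) ⬝ᵥ w c k) := by
      rw [Matrix.star_dotProduct, hdot_same]
    rw [hT, hdot_same, h2,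
      mul_comm (star (w c j) ⬝ᵥ w c k) (star (star (w c j) ⬝ᵥ w c k)), hz]
  have hsum : (∑ ct : Fin C, ∑ j : Fin (K ct),
        ((P ct * g ct j : ℝ) : ℂ) * ((1 / ((N : ℂ) * M)) *
          (Cm ct j * Rfull ct j * (Cm ct j)ᴴ *
            (Cm c k * Phifull * (Cm c k)ᴴ)).trace))
      = (1 / ((N : ℂ) * M)) * ∑ j : Fin (K c),
          ((P c * g c j : ℝ) : ℂ) *
            (((‖star (w c j) ⬝ᵥ w c k‖ ^ 2 : ℝ) : ℂ) * (Rcheck c j * Phicheck).trace) := by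
    rw [Fintype.sum_eq_single c (fun ct hne =>
      Finset.sum_eq_zero fun j _ => by rw [hzero ct hne j, mul_zero, mul_zero])]
    rw [Finset.mul_sum]
    exact Finset.sum_congr rfl fun j _ => by rw [hTc j]; ring
  rw [htrS, hsum]
  have hq1 : ((N : ℂ) * M) ≠ 0 := by
    apply mul_ne_zero <;> exact_mod_cast (by omega : ¬ _ = 0)
  have hq2 : ((M : ℂ)) ≠ 0 := by exact_mod_cast hM.ne'
  have hR : (∑ j : Fin (K c), ((P c * g c j : ℝ) : ℂ) * ((1 / (M : ℂ)) *
        ((‖star (w c j) ⬝ᵥ w c k‖ ^ 2 : ℝ) : ℂ) * (Rcheck c j * Phicheck).trace))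
      = (1 / (M : ℂ)) * ∑ j : Fin (K c), ((P c * g c j : ℝ) : ℂ) *
          (((‖star (w c j) ⬝ᵥ w c k‖ ^ 2 : ℝ) : ℂ) * (Rcheck c j * Phicheck).trace) := by
    rw [Finset.mul_sum]
    exact Finset.sum_congr rfl fun j _ => by ring
  rw [hR, myscal _ _ _ _ _ hq1, myscal _ _ _ _ _ hq2]
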